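/- Let p ≥ 1 be an integer and ψ := U_{2p+1} − U_{2p−1} − 2 ∈ ℂ[x]. Then: (i) ψ'(2) = 4p² and ψ'(−2) = −4p², so ±2 are simple roots of ψ; and (ii) every root a ∈ ℂ of ψ with a ≠ 2 and a ≠ −2 satisfies ψ'(a) = 0 and (a² − 4)·ψ''(a) = 8p² (in particular a is a root of multiplicity exactly 2). -/
import Mathlib

noncomputable section

/-- Chebyshev polynomials of the second kind: `U 0 = 0`, `U 1 = 1`,
`U (s+2) = X·U (s+1) − U s` (so `U_s(2 cos t) = sin(st)/sin t`). -/
def chebU : ℕ → Polynomial ℂ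
  | 0 => 0
  | 1 => 1
  | (n + 2) => Polynomial.X * chebU (n + 1) - chebU n

namespace PsiAux

open Polynomial

/-- Normalized Chebyshev of the first kind: `Ct n (2 cos t) = 2 cos (n t)`. -/
def Ct : ℕ → Polynomial ℂ
  | 0 => 2
  | 1 => Polynomial.X
  | (n + 2) => Polynomial.X * Ct (n + 1) - Ct n

lemma chebU_add_two (n : ℕ) : chebU (n + 2) = X * chebU (n + 1) - chebU n := rfl
lemma Ct_add_two (n : ℕ) : Ct (n + 2) = X * Ct (n + 1) - Ct n := rfl

lemma two_ne_zero' : (2 : Polynomial ℂ) ≠ 0 := by norm_num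
lemma four_ne_zero' : (4 : Polynomial ℂ) ≠ 0 := by norm_num

lemma chebU_sub (n : ℕ) : chebU (n + 2) - chebU n = Ct (n + 1) := by
  induction n using Nat.twoStepInduction with
  | zero => show X * 1 - 0 - 0 = X; ring
  | one => show X * (X * 1 - 0) - 1 - 1 = X * X - 2; ring
  | more n ih1 ih2 =>
    rw [chebU_add_two (n+2), Ct_add_two, ← ih1, ← ih2, chebU_add_two n]
    ring

lemma Ct_eq (n : ℕ) : Ct (n + 1) = X * chebU (n + 1) - 2 * chebU n := by
  rw [← chebU_sub, chebU_add_two]; ring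

lemma deriv_Ct (n : ℕ) : derivative (Ct n) = (n : Polynomial ℂ) * chebU n := by
  induction n using Nat.twoStepInduction with
  | zero => simp [Ct, chebU]
  | one => simp [Ct, chebU]
  | more n ih1 ih2 =>
    rw [Ct_add_two, derivative_sub, derivative_mul, derivative_X, ih1, ih2,
      chebU_add_two, Ct_eq]
    push_cast
    ring

lemma pair (n : ℕ) :
    2 * Ct (n + 1) = X * Ct n + (X ^ 2 - 4) * chebU n ∧
    2 * chebU (n + 1) = X * chebU n + Ct n := by
  induction n with
  | zero =>
    constructor
    · show 2 * X = X * 2 + (X ^ 2 - 4) * 0; ring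
    · show 2 * 1 = X * 0 + 2; ring
  | succ n ih =>
    obtain ⟨h1, h2⟩ := ih
    have hQ : 2 * chebU (n + 2) = X * chebU (n + 1) + Ct (n + 1) := by
      rw [chebU_add_two, Ct_eq]; ring
    refine ⟨?_, hQ⟩
    have key : 2 * (X * Ct (n+1) - 2 * Ct n) = 2 * ((X ^ 2 - 4) * chebU (n+1)) := by
      calc 2 * (X * Ct (n+1) - 2 * Ct n)
          = X * (2 * Ct (n+1)) - 4 * Ct n := by ring
        _ = X * (X * Ct n + (X ^ 2 - 4) * chebU n) - 4 * Ct n := by rw [h1]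
        _ = (X ^ 2 - 4) * (X * chebU n + Ct n) := by ring
        _ = (X ^ 2 - 4) * (2 * chebU (n+1)) := by rw [h2]
        _ = 2 * ((X ^ 2 - 4) * chebU (n+1)) := by ring
    have hDU : X * Ct (n+1) - 2 * Ct n = (X ^ 2 - 4) * chebU (n+1) :=
      mul_left_cancel₀ two_ne_zero' key
    rw [Ct_add_two, ← hDU]; ring

lemma pell (n : ℕ) : Ct n ^ 2 - (X ^ 2 - 4) * chebU n ^ 2 = 4 := by
  induction n with
  | zero => show (2 : Polynomial ℂ) ^ 2 - (X ^ 2 - 4) * 0 ^ 2 = 4; ring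
  | succ n ih =>
    obtain ⟨h1, h2⟩ := pair n
    have key : 4 * (Ct (n+1) ^ 2 - (X ^ 2 - 4) * chebU (n+1) ^ 2) = 4 * 4 := by
      calc 4 * (Ct (n+1) ^ 2 - (X ^ 2 - 4) * chebU (n+1) ^ 2)
          = (2 * Ct (n+1)) ^ 2 - (X ^ 2 - 4) * (2 * chebU (n+1)) ^ 2 := by ring
        _ = (X * Ct n + (X ^ 2 - 4) * chebU n) ^ 2
              - (X ^ 2 - 4) * (X * chebU n + Ct n) ^ 2 := by rw [h1, h2]
        _ = 4 * (Ct n ^ 2 - (X ^ 2 - 4) * chebU n ^ 2) := by ring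
        _ = 4 * 4 := by rw [ih]
    exact mul_left_cancel₀ four_ne_zero' key

lemma eval_two_chebU (n : ℕ) : Polynomial.eval (2 : ℂ) (chebU n) = n := by
  induction n using Nat.twoStepInduction with
  | zero => simp [chebU]
  | one => simp [chebU]
  | more n ih1 ih2 =>
    rw [chebU_add_two]
    simp only [eval_sub, eval_mul, eval_X, ih1, ih2]
    push_cast; ring

lemma eval_neg_two_chebU (n : ℕ) :
    Polynomial.eval (-2 : ℂ) (chebU n) = (-1) ^ (n + 1) * n := by
  induction n using Nat.twoStepInduction with
  | zero => simp [chebU]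
  | one => simp [chebU]
  | more n ih1 ih2 =>
    rw [chebU_add_two]
    simp only [eval_sub, eval_mul, eval_X, ih1, ih2]
    push_cast
    rw [pow_succ ((-1:ℂ)) (n+2), pow_succ ((-1:ℂ)) (n+1)]
    ring

lemma eval_two_Ct (n : ℕ) : Polynomial.eval (2 : ℂ) (Ct n) = 2 := by
  induction n using Nat.twoStepInduction with
  | zero => simp [Ct]
  | one => simp [Ct]
  | more n ih1 ih2 =>
    rw [Ct_add_two]
    simp only [eval_sub, eval_mul, eval_X, ih1, ih2]
    ring

lemma eval_neg_two_Ct (n : ℕ) :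
    Polynomial.eval (-2 : ℂ) (Ct n) = 2 * (-1) ^ n := by
  induction n using Nat.twoStepInduction with
  | zero => simp [Ct]
  | one => simp [Ct]
  | more n ih1 ih2 =>
    rw [Ct_add_two]
    simp only [eval_sub, eval_mul, eval_X, ih1, ih2]
    rw [pow_succ ((-1:ℂ)) (n+1), pow_succ ((-1:ℂ)) n]
    ring

lemma chebU_ne_zero {n : ℕ} (hn : 1 ≤ n) : chebU n ≠ 0 := by
  intro h
  have h2 := eval_two_chebU n
  rw [h, eval_zero] at h2
  have : (n : ℂ) = 0 := h2.symm
  have := Nat.cast_eq_zero.mp this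
  omega

lemma hC2 : (Polynomial.C (2:ℂ)) = 2 := map_ofNat Polynomial.C 2

lemma deriv_chebU (n : ℕ) :
    (X ^ 2 - 4) * derivative (chebU n) =
      (n : Polynomial ℂ) * Ct n - X * chebU n := by
  rcases Nat.eq_zero_or_pos n with h | h
  · subst h; simp [chebU, Ct]
  have hd := congrArg derivative (pell n)
  rw [derivative_sub, derivative_pow, derivative_mul, derivative_pow, deriv_Ct] at hd
  simp only [pow_one, mul_one, sub_zero, Polynomial.C_eq_natCast, Nat.cast_ofNat, hC2,
    derivative_sub, derivative_pow, derivative_X, derivative_ofNat, Nat.sub_self] at hd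
  norm_num at hd
  have key : (2 * chebU n) *
      ((n : Polynomial ℂ) * Ct n - X * chebU n - (X ^ 2 - 4) * derivative (chebU n)) = 0 := by
    linear_combination hd
  rcases mul_eq_zero.mp key with h0 | h0
  · exact absurd (mul_left_cancel₀ two_ne_zero'
      ((by rw [h0]; ring : (2:Polynomial ℂ) * chebU n = 2 * 0))) (chebU_ne_zero h)
  · linear_combination -h0


lemma psi_eq (p : ℕ) (hp : 1 ≤ p) :
    chebU (2 * p + 1) - chebU (2 * p - 1) - 2 = Ct (2 * p) - 2 := by
  obtain ⟨q, rfl⟩ : ∃ q, p = q + 1 := ⟨p - 1, by omega⟩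
  have h1 : 2 * (q + 1) + 1 = (2 * q + 1) + 2 := by ring
  have h2 : 2 * (q + 1) - 1 = 2 * q + 1 := by omega
  have h3 : 2 * (q + 1) = (2 * q + 1) + 1 := by ring
  rw [h1, h2, h3, ← chebU_sub (2*q+1)]

end PsiAux

open Polynomial in
/-- Root structure of `ψ = U_{2p+1} − U_{2p−1} − 2`: the roots `±2` are simple with
`ψ'(±2) = ±4p²`, and every other root `a` is a double root with `ψ'(a) = 0` and
`(a² − 4)·ψ''(a) = 8p²`. -/
theorem psi_root_structure (p : ℕ) (hp : 1 ≤ p) :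
    (Polynomial.eval (2 : ℂ) (derivative (chebU (2 * p + 1) - chebU (2 * p - 1) - 2)) =
        4 * (p : ℂ) ^ 2) ∧
    (Polynomial.eval (-2 : ℂ) (derivative (chebU (2 * p + 1) - chebU (2 * p - 1) - 2)) =
        -(4 * (p : ℂ) ^ 2)) ∧
    rootMultiplicity (2 : ℂ) (chebU (2 * p + 1) - chebU (2 * p - 1) - 2) = 1 ∧
    rootMultiplicity (-2 : ℂ) (chebU (2 * p + 1) - chebU (2 * p - 1) - 2) = 1 ∧
    ∀ a : ℂ, Polynomial.eval a (chebU (2 * p + 1) - chebU (2 * p - 1) - 2) = 0 →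
      a ≠ 2 → a ≠ -2 →
      Polynomial.eval a (derivative (chebU (2 * p + 1) - chebU (2 * p - 1) - 2)) = 0 ∧
      (a ^ 2 - 4) *
          Polynomial.eval a
            (derivative (derivative (chebU (2 * p + 1) - chebU (2 * p - 1) - 2))) =
        8 * (p : ℂ) ^ 2 ∧
      rootMultiplicity a (chebU (2 * p + 1) - chebU (2 * p - 1) - 2) = 2 := by
  classical
  open PsiAux in
  rw [psi_eq p hp]
  set n : ℕ := 2 * p with hn
  have hψd : derivative (Ct n - 2) = (n : Polynomial ℂ) * chebU n := by
    rw [derivative_sub, PsiAux.deriv_Ct]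
    simp
  have hpc : (p : ℂ) ≠ 0 := Nat.cast_ne_zero.mpr (by omega)
  have hnc : (n : ℂ) = 2 * p := by push_cast [hn]; ring
  -- derivative evaluations at ±2
  have hd2 : Polynomial.eval (2 : ℂ) (derivative (Ct n - 2)) = 4 * (p : ℂ) ^ 2 := by
    rw [hψd]
    simp only [eval_mul, eval_natCast, PsiAux.eval_two_chebU, hnc]
    ring
  have hdn2 : Polynomial.eval (-2 : ℂ) (derivative (Ct n - 2)) = -(4 * (p : ℂ) ^ 2) := by
    rw [hψd]
    simp only [eval_mul, eval_natCast, PsiAux.eval_neg_two_chebU, hnc]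
    have : (-1 : ℂ) ^ (n + 1) = -1 := Odd.neg_one_pow ⟨p, by omega⟩
    rw [this]
    ring
  -- ψ ≠ 0
  have hψ0 : Ct n - 2 ≠ 0 := by
    intro h
    rw [h] at hd2
    simp at hd2
    omega
  -- roots at ±2
  have hr2 : IsRoot (Ct n - 2) 2 := by
    simp [IsRoot, PsiAux.eval_two_Ct]
  have hrn2 : IsRoot (Ct n - 2) (-2) := by
    have : (-1 : ℂ) ^ n = 1 := Even.neg_one_pow ⟨p, by omega⟩
    simp [IsRoot, PsiAux.eval_neg_two_Ct, this]
  have hm2 : rootMultiplicity (2 : ℂ) (Ct n - 2) = 1 := by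
    have hpos : 0 < rootMultiplicity (2 : ℂ) (Ct n - 2) :=
      (rootMultiplicity_pos hψ0).mpr hr2
    have hlt : ¬ 1 < rootMultiplicity (2 : ℂ) (Ct n - 2) := by
      rw [one_lt_rootMultiplicity_iff_isRoot hψ0]
      rintro ⟨-, h1⟩
      rw [IsRoot, hd2] at h1
      exact mul_ne_zero (by norm_num) (pow_ne_zero 2 hpc) h1
    omega
  have hmn2 : rootMultiplicity (-2 : ℂ) (Ct n - 2) = 1 := by
    have hpos : 0 < rootMultiplicity (-2 : ℂ) (Ct n - 2) :=
      (rootMultiplicity_pos hψ0).mpr hrn2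
    have hlt : ¬ 1 < rootMultiplicity (-2 : ℂ) (Ct n - 2) := by
      rw [one_lt_rootMultiplicity_iff_isRoot hψ0]
      rintro ⟨-, h1⟩
      rw [IsRoot, hdn2] at h1
      exact mul_ne_zero (by norm_num : (4:ℂ) ≠ 0) (pow_ne_zero 2 hpc) (neg_eq_zero.mp h1)
    omega
  refine ⟨hd2, hdn2, hm2, hmn2, ?_⟩
  intro a ha ha2 han2
  have haC : Polynomial.eval a (Ct n) = 2 := by
    have := ha
    simp only [eval_sub, eval_ofNat] at this
    linear_combination this
  have ha4 : a ^ 2 - 4 ≠ 0 := by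
    intro h
    have : (a - 2) * (a + 2) = 0 := by linear_combination h
    rcases mul_eq_zero.mp this with h' | h'
    · exact ha2 (by linear_combination h')
    · exact han2 (by linear_combination h')
  -- U n (a) = 0
  have hpell := congrArg (Polynomial.eval a) (PsiAux.pell n)
  simp only [eval_sub, eval_pow, eval_mul, eval_ofNat, eval_X] at hpell
  rw [haC] at hpell
  have hU0 : Polynomial.eval a (chebU n) = 0 := by
    have h1 : (a ^ 2 - 4) * (Polynomial.eval a (chebU n)) ^ 2 = 0 := by
      linear_combination -hpell
    have h2 := (mul_eq_zero.mp h1).resolve_left ha4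
    exact pow_eq_zero_iff (n := 2) (by norm_num) |>.mp h2
  have hda : Polynomial.eval a (derivative (Ct n - 2)) = 0 := by
    rw [hψd]
    simp [hU0]
  -- second derivative
  have hdd : derivative (derivative (Ct n - 2)) = (n : Polynomial ℂ) * derivative (chebU n) := by
    rw [hψd, derivative_mul]
    simp
  have hkey := congrArg (Polynomial.eval a) (PsiAux.deriv_chebU n)
  simp only [eval_sub, eval_pow, eval_mul, eval_ofNat, eval_X, eval_natCast] at hkey
  rw [haC, hU0] at hkey
  have hval : (a ^ 2 - 4) * Polynomial.eval a (derivative (derivative (Ct n - 2)))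
      = 8 * (p : ℂ) ^ 2 := by
    rw [hdd]
    simp only [eval_mul, eval_natCast]
    calc (a ^ 2 - 4) * ((n : ℂ) * Polynomial.eval a (derivative (chebU n)))
        = (n : ℂ) * ((a ^ 2 - 4) * Polynomial.eval a (derivative (chebU n))) := by ring
      _ = (n : ℂ) * ((n : ℂ) * 2 - a * 0) := by rw [hkey]
      _ = 8 * (p : ℂ) ^ 2 := by rw [hnc]; ring
  refine ⟨hda, hval, ?_⟩
  have hgt1 : 1 < rootMultiplicity a (Ct n - 2) :=
    (one_lt_rootMultiplicity_iff_isRoot hψ0).mpr ⟨ha, hda⟩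
  have hle2 : ¬ 2 < rootMultiplicity a (Ct n - 2) := by
    rw [lt_rootMultiplicity_iff_isRoot_iterate_derivative hψ0]
    intro h
    have h2 := h 2 le_rfl
    simp only [Function.iterate_succ, Function.iterate_zero, Function.comp_apply, id_eq,
      IsRoot] at h2
    rw [h2, mul_zero] at hval
    exact mul_ne_zero (by norm_num : (8:ℂ) ≠ 0) (pow_ne_zero 2 hpc) hval.symm
  omega
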